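/- Every distributive ⟨∨,0⟩-semilattice D is a ⟨∨,0⟩-retract of an ultraboolean ⟨∨,0⟩-semilattice B: there exist an ultraboolean ⟨∨,0⟩-semilattice B and ⟨∨,0⟩-homomorphisms ε : D → B and μ : B → D with μ ∘ ε = id_D. Furthermore, if D has a largest element, then B can be taken to have a largest element, with ε preserving it. -/

import Mathlib

universe u

/-- A join-semilattice is distributive if whenever `c ≤ a ⊔ b` there are
`x ≤ a` and `y ≤ b` with `c = x ⊔ y`. -/
def SupDistrib (α : Type*) [SemilatticeSup α] : Prop :=
  ∀ a b c : α, c ≤ a ⊔ b → ∃ x y, x ≤ a ∧ y ≤ b ∧ c = x ⊔ y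

/-- A `⟨∨,0⟩`-homomorphism: preserves binary joins and the least element. -/
def IsSupBotHom {α β : Type*} [SemilatticeSup α] [OrderBot α] [SemilatticeSup β] [OrderBot β]
    (f : α → β) : Prop :=
  (∀ a b : α, f (a ⊔ b) = f a ⊔ f b) ∧ f ⊥ = ⊥

/-- Bundled `⟨∨,0⟩`-semilattices. -/
structure SL : Type (u + 1) where
  carrier : Type u
  [instSup : SemilatticeSup carrier]
  [instBot : OrderBot carrier]

attribute [instance] SL.instSup SL.instBot

instance : CoeSort SL.{u} (Type u) := ⟨SL.carrier⟩

/-- A `⟨∨,0⟩`-subsemilattice: a subset containing `⊥` and closed under binary joins. -/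
def IsSubSemilat {α : Type*} [SemilatticeSup α] [OrderBot α] (s : Set α) : Prop :=
  ⊥ ∈ s ∧ ∀ ⦃x⦄, x ∈ s → ∀ ⦃y⦄, y ∈ s → x ⊔ y ∈ s

/-- A `⟨∨,0⟩`-semilattice is ultraboolean if it is the union of a directed family of
finite `⟨∨,0⟩`-subsemilattices, each of which is a Boolean lattice under the induced
ordering (i.e. order-isomorphic to the powerset lattice of a finite set). -/
def Ultraboolean (α : Type*) [SemilatticeSup α] [OrderBot α] : Prop :=
  ∃ F : Set (Set α), DirectedOn (· ⊆ ·) F ∧ (∀ x : α, ∃ s ∈ F, x ∈ s) ∧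
    ∀ s ∈ F, IsSubSemilat s ∧ s.Finite ∧ ∃ n : ℕ, Nonempty (↥s ≃o Finset (Fin n))

universe v w

open Classical

noncomputable section

local instance (priority := 10000) instDecEqAll (α : Sort _) : DecidableEq α :=
  fun _ _ => Classical.propDecidable _

namespace UB

variable {α : Type u} {β : Type v} {E : Type w} [SemilatticeSup α] [OrderBot α]
  [SemilatticeSup β] [OrderBot β] [SemilatticeSup E] [OrderBot E]

theorem hom_mono {f : α → β} (hf : IsSupBotHom f) : Monotone f := by
  intro a b hab
  have h : f a ⊔ f b = f b := by rw [← hf.1, sup_eq_right.2 hab]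
  exact le_sup_left.trans h.le

theorem hom_comp {f : α → β} {g : β → E} (hf : IsSupBotHom f) (hg : IsSupBotHom g) :
    IsSupBotHom (g ∘ f) :=
  ⟨fun a b => by simp [hf.1, hg.1], by simp [hf.2, hg.2]⟩

theorem hom_id : IsSupBotHom (id : α → α) := ⟨fun _ _ => rfl, rfl⟩

/-- membership in a `Finset.sup` of sets -/
theorem mem_finsup {γ : Type*} {ι : Type*} (F : Finset γ) (f : γ → Set ι) (t : ι) :
    t ∈ F.sup f ↔ ∃ y ∈ F, t ∈ f y := by
  classical
  induction F using Finset.induction with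
  | empty => simp
  | insert _ _ h ih => simp [Finset.sup_insert, Set.mem_union, ih, or_and_right, exists_or]

/-- membership in a `Finset.inf` of sets -/
theorem mem_fininf {γ : Type*} {ι : Type*} (F : Finset γ) (f : γ → Set ι) (t : ι) :
    t ∈ F.inf f ↔ ∀ y ∈ F, t ∈ f y := by
  classical
  induction F using Finset.induction with
  | empty => simp
  | insert _ _ h ih => simp [Finset.inf_insert, Set.mem_inter_iff, ih]

theorem sup_mem_closed {S : Finset α} (hbot : ⊥ ∈ S)
    (hcl : ∀ ⦃x⦄, x ∈ S → ∀ ⦃y⦄, y ∈ S → x ⊔ y ∈ S) {T : Finset α} (hT : T ⊆ S) :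
    T.sup id ∈ S := by
  classical
  induction T using Finset.induction with
  | empty => simpa using hbot
  | @insert a T ha ih =>
      have haS : a ∈ S := hT (Finset.mem_insert_self a T)
      have hTS : T ⊆ S := fun x hx => hT (Finset.mem_insert_of_mem hx)
      simpa [Finset.sup_insert] using hcl haS (ih hTS)

end UB

/-! ### Presented semilattices -/

namespace UB

variable {γ : Type u}

/-- one step of congruence: apply a relation inside a join context -/
def PStep (R : Finset γ → Finset γ → Prop) (a b : Finset γ) : Prop :=
  ∃ s t u, R s t ∧ a = s ∪ u ∧ b = t ∪ u

def PCong (R : Finset γ → Finset γ → Prop) : Finset γ → Finset γ → Prop :=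
  Relation.EqvGen (PStep R)

theorem pcong_equiv (R : Finset γ → Finset γ → Prop) : Equivalence (PCong R) :=
  Relation.EqvGen.is_equivalence _

theorem pcong_union_right {R : Finset γ → Finset γ → Prop} {a b : Finset γ}
    (h : PCong R a b) (c : Finset γ) : PCong R (a ∪ c) (b ∪ c) := by
  classical
  induction h with
  | rel x y hxy =>
      obtain ⟨s, t, u, hst, rfl, rfl⟩ := hxy
      exact Relation.EqvGen.rel _ _ ⟨s, t, u ∪ c, hst, by rw [Finset.union_assoc],
        by rw [Finset.union_assoc]⟩
  | refl x => exact Relation.EqvGen.refl _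
  | symm x y _ ih => exact Relation.EqvGen.symm _ _ ih
  | trans x y z _ _ ih₁ ih₂ => exact Relation.EqvGen.trans _ _ _ ih₁ ih₂

def PSetoid (R : Finset γ → Finset γ → Prop) : Setoid (Finset γ) :=
  ⟨PCong R, pcong_equiv R⟩

def Pres (R : Finset γ → Finset γ → Prop) : Type u := Quotient (PSetoid R)

variable {R : Finset γ → Finset γ → Prop}

def pmk (R : Finset γ → Finset γ → Prop) (a : Finset γ) : Pres R :=
  Quotient.mk (PSetoid R) a

theorem pmk_eq {a b : Finset γ} (h : PCong R a b) : pmk R a = pmk R b := Quotient.sound h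

instance : Max (Pres R) :=
  ⟨fun x y => Quotient.liftOn₂ x y (fun a b => pmk R (a ∪ b)) (by
    intro a b a' b' ha hb
    apply pmk_eq
    refine (pcong_equiv R).trans (pcong_union_right ha b) ?_
    rw [Finset.union_comm a' b, Finset.union_comm a' b']
    exact pcong_union_right hb a')⟩

theorem pres_sup_def (a b : Finset γ) : (pmk R a ⊔ pmk R b : Pres R) = pmk R (a ∪ b) := rfl

instance : SemilatticeSup (Pres R) :=
  SemilatticeSup.mk'
    (fun x y => by
      refine Quotient.inductionOn₂ x y fun a b => ?_
      show pmk R (a ∪ b) = pmk R (b ∪ a)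
      rw [Finset.union_comm])
    (fun x y z => by
      refine Quotient.inductionOn₃ x y z fun a b c => ?_
      show pmk R (a ∪ b ∪ c) = pmk R (a ∪ (b ∪ c))
      rw [Finset.union_assoc])
    (fun x => by
      refine Quotient.inductionOn x fun a => ?_
      show pmk R (a ∪ a) = pmk R a
      rw [Finset.union_self])

instance : OrderBot (Pres R) where
  bot := pmk R ∅
  bot_le := fun x => by
    refine Quotient.inductionOn x fun a => ?_
    show (pmk R ∅ ⊔ pmk R a) = pmk R a
    rw [pres_sup_def, Finset.empty_union]

theorem pres_bot_def : (⊥ : Pres R) = pmk R ∅ := rfl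

/-- generator -/
def pgen (R : Finset γ → Finset γ → Prop) (x : γ) : Pres R := pmk R {x}

/-- lift a valuation to a hom, provided it respects the relations -/
def plift {E : Type w} [SemilatticeSup E] [OrderBot E] (v : γ → E)
    (hv : ∀ s t, R s t → s.sup v = t.sup v) : Pres R → E :=
  Quotient.lift (fun a => a.sup v) (by
    intro a b h
    induction h with
    | rel x y hxy =>
        obtain ⟨s, t, u, hst, rfl, rfl⟩ := hxy
        classical
        show (s ∪ u).sup v = (t ∪ u).sup v
        rw [Finset.sup_union, Finset.sup_union, hv s t hst]
    | refl x => rfl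
    | symm x y _ ih => exact ih.symm
    | trans x y z _ _ ih₁ ih₂ => exact ih₁.trans ih₂)

theorem plift_hom {E : Type w} [SemilatticeSup E] [OrderBot E] (v : γ → E)
    (hv : ∀ s t, R s t → s.sup v = t.sup v) : IsSupBotHom (plift v hv) := by
  constructor
  · intro a b
    refine Quotient.inductionOn₂ a b fun s t => ?_
    show (s ∪ t).sup v = s.sup v ⊔ t.sup v
    classical
    rw [Finset.sup_union]
  · show (∅ : Finset γ).sup v = ⊥
    simp

theorem plift_gen {E : Type w} [SemilatticeSup E] [OrderBot E] (v : γ → E)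
    (hv : ∀ s t, R s t → s.sup v = t.sup v) (x : γ) : plift v hv (pgen R x) = v x := by
  show ({x} : Finset γ).sup v = v x
  simp

theorem pmk_le_iff {a : Finset γ} {y : Pres R} :
    pmk R a ≤ y ↔ ∀ x ∈ a, pgen R x ≤ y := by
  classical
  constructor
  · intro h x hx
    refine le_trans ?_ h
    have : ({x} : Finset γ) ∪ a = a := by
      rw [Finset.union_comm]
      exact Finset.union_eq_left.mpr (Finset.singleton_subset_iff.mpr hx)
    show pgen R x ⊔ pmk R a = pmk R a
    rw [pgen, pres_sup_def, this]
  · intro h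
    induction a using Finset.induction with
    | empty => exact bot_le
    | @insert z s hz ih =>
        have h1 : pmk R (insert z s) = pgen R z ⊔ pmk R s := by
          rw [pgen, pres_sup_def, Finset.insert_eq]
        rw [h1]
        exact sup_le (h z (Finset.mem_insert_self z s))
          (ih fun x hx => h x (Finset.mem_insert_of_mem hx))

end UB

/-! ### One level of the tower -/

namespace UB

variable {X : Type u} [SemilatticeSup X] [OrderBot X]

def IsSubSL (S : Finset X) : Prop :=
  ⊥ ∈ S ∧ ∀ ⦃x⦄, x ∈ S → ∀ ⦃y⦄, y ∈ S → x ⊔ y ∈ S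

/-- ideal of the finite subsemilattice `S` (proper) -/
def IsIdl (S I : Finset X) : Prop :=
  I ⊆ S ∧ ⊥ ∈ I ∧ (∀ ⦃x⦄, x ∈ S → ∀ ⦃y⦄, y ∈ I → x ≤ y → x ∈ I) ∧
    (∀ ⦃x⦄, x ∈ I → ∀ ⦃y⦄, y ∈ I → x ⊔ y ∈ I) ∧ I ≠ S

structure Atom (X : Type u) [SemilatticeSup X] [OrderBot X] : Type u where
  S : Finset X
  I : Finset X
  hS : IsSubSL S
  hI : IsIdl S I

abbrev Gen (X : Type u) [SemilatticeSup X] [OrderBot X] : Type u := X ⊕ Atom X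

/-- the finset of (proper) ideals of `S` avoiding `x` -/
def idlsAvoid (S : Finset X) (x : X) : Finset (Finset X) :=
  S.powerset.filter (fun I => IsIdl S I ∧ x ∉ I)

theorem mem_idlsAvoid {S : Finset X} {x : X} {I : Finset X} :
    I ∈ idlsAvoid S x ↔ IsIdl S I ∧ x ∉ I := by
  unfold idlsAvoid
  simp only [Finset.mem_filter, Finset.mem_powerset, and_iff_right_iff_imp]
  exact fun h => h.1.1

/-- the covering finset of generators for element `x` of subsemilattice `S` -/
def coverSet (S : Finset X) (hS : IsSubSL S) (x : X) : Finset (Gen X) :=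
  (idlsAvoid S x).attach.image
    (fun I => Sum.inr ⟨S, I.1, hS, (mem_idlsAvoid.mp I.2).1⟩)

theorem atom_mem_coverSet {S : Finset X} (hS : IsSubSL S) {x : X} {I : Finset X}
    (hI : IsIdl S I) (hx : x ∉ I) :
    (Sum.inr ⟨S, I, hS, hI⟩ : Gen X) ∈ coverSet S hS x := by
  rw [coverSet, Finset.mem_image]
  exact ⟨⟨I, mem_idlsAvoid.mpr ⟨hI, hx⟩⟩, Finset.mem_attach _ _, rfl⟩

theorem exists_of_mem_coverSet {S : Finset X} {hS : IsSubSL S} {x : X} {g : Gen X}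
    (hg : g ∈ coverSet S hS x) :
    ∃ (I : Finset X) (hI : IsIdl S I), g = Sum.inr ⟨S, I, hS, hI⟩ := by
  rw [coverSet, Finset.mem_image] at hg
  obtain ⟨I, -, rfl⟩ := hg
  exact ⟨I.1, (mem_idlsAvoid.mp I.2).1, rfl⟩

inductive Rels (X : Type u) [SemilatticeSup X] [OrderBot X] :
    Finset (Gen X) → Finset (Gen X) → Prop
  | join (b b' : X) : Rels X {Sum.inl b, Sum.inl b'} {Sum.inl (b ⊔ b')}
  | bot : Rels X {Sum.inl ⊥} ∅
  | cover (S : Finset X) (hS : IsSubSL S) (x : X) (hx : x ∈ S) :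
      Rels X {Sum.inl x} (coverSet S hS x)

def Next (X : Type u) [SemilatticeSup X] [OrderBot X] : Type u := Pres (Rels X)

instance : SemilatticeSup (Next X) := inferInstanceAs (SemilatticeSup (Pres (Rels X)))
instance : OrderBot (Next X) := inferInstanceAs (OrderBot (Pres (Rels X)))

def emb (X : Type u) [SemilatticeSup X] [OrderBot X] : X → Next X :=
  fun b => pgen (Rels X) (Sum.inl b)

theorem emb_hom : IsSupBotHom (emb X) := by
  constructor
  · intro a b
    refine pmk_eq (Relation.EqvGen.symm _ _ ?_)
    refine Relation.EqvGen.rel _ _ ⟨{Sum.inl a, Sum.inl b}, {Sum.inl (a ⊔ b)}, ∅, Rels.join a b,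
      ?_, ?_⟩
    · show ({Sum.inl a} : Finset (Gen X)) ∪ {Sum.inl b} = {Sum.inl a, Sum.inl b} ∪ ∅
      rw [Finset.union_empty, Finset.insert_eq]
    · simp
  · refine pmk_eq ?_
    exact Relation.EqvGen.rel _ _ ⟨{Sum.inl ⊥}, ∅, ∅, Rels.bot, by simp [pgen], by simp⟩

/-- The fundamental covering equation inside `Next X`. -/
theorem emb_eq_cover {S : Finset X} (hS : IsSubSL S) {x : X} (hx : x ∈ S) :
    emb X x = pmk (Rels X) (coverSet S hS x) := by
  refine pmk_eq (Relation.EqvGen.rel _ _ ⟨{Sum.inl x}, coverSet S hS x, ∅,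
    Rels.cover S hS x hx, by simp [pgen], by simp⟩)

/-- build a hom out of `Next X` -/
def nextLift {E : Type w} [SemilatticeSup E] [OrderBot E]
    (vB : X → E) (vA : Atom X → E) (hB : IsSupBotHom vB)
    (hcov : ∀ (S : Finset X) (hS : IsSubSL S) (x : X), x ∈ S →
      vB x = (coverSet S hS x).sup (Sum.elim vB vA)) : Next X → E :=
  plift (Sum.elim vB vA) (by
    intro s t hst
    induction hst with
    | join b b' => simp [hB.1]
    | bot => simp [hB.2]
    | cover S hS x hx =>
        simpa using hcov S hS x hx)

theorem nextLift_hom {E : Type w} [SemilatticeSup E] [OrderBot E]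
    (vB : X → E) (vA : Atom X → E) (hB : IsSupBotHom vB) (hcov) :
    IsSupBotHom (nextLift (X := X) vB vA hB hcov) := plift_hom _ _

theorem nextLift_emb {E : Type w} [SemilatticeSup E] [OrderBot E]
    (vB : X → E) (vA : Atom X → E) (hB : IsSupBotHom vB) (hcov) (b : X) :
    nextLift (X := X) vB vA hB hcov (emb X b) = vB b := plift_gen _ _ _

theorem nextLift_pmk {E : Type w} [SemilatticeSup E] [OrderBot E]
    (vB : X → E) (vA : Atom X → E) (hB : IsSupBotHom vB) (hcov) (F : Finset (Gen X)) :
    nextLift (X := X) vB vA hB hcov (pmk (Rels X) F) = F.sup (Sum.elim vB vA) := rfl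

/-- sup over a coverSet, expressed via the ideal finset, for `vA` factoring through `a.I`. -/
theorem coverSet_sup {E : Type w} [SemilatticeSup E] [OrderBot E]
    (S : Finset X) (hS : IsSubSL S) (x : X) (vB : X → E) (m : Finset X → E) :
    (coverSet S hS x).sup (Sum.elim vB (fun a => m a.I)) = (idlsAvoid S x).sup m := by
  classical
  rw [coverSet, Finset.sup_image]
  have : ((Sum.elim vB (fun a => m a.I)) ∘ fun I : {I // I ∈ idlsAvoid S x} =>
      (Sum.inr ⟨S, I.1, hS, (mem_idlsAvoid.mp I.2).1⟩ : Gen X)) = fun I => m I.1 := by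
    funext I; rfl
  rw [this]
  exact Finset.sup_attach _ _

end UB
/-! ### Canonical extensions into powerset targets -/

namespace UB

variable {X : Type u} [SemilatticeSup X] [OrderBot X] {ι : Type w}

/-- canonical atom value for a `Set`-valued hom -/
def canonA (h : X → Set ι) (a : Atom X) : Set ι := (a.S \ a.I).inf h

/-- The key measure identity: any `Set`-valued hom satisfies the covering equations
with the canonical atom values. -/
theorem canon_cover (h : X → Set ι) (hh : IsSupBotHom h)
    (S : Finset X) (hS : IsSubSL S) (x : X) (hx : x ∈ S) :
    h x = (idlsAvoid S x).sup (fun I => (S \ I).inf h) := by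
  classical
  apply Set.eq_of_subset_of_subset
  · intro t ht
    rw [mem_finsup]
    refine ⟨S.filter (fun y => t ∉ h y), ?_, ?_⟩
    · rw [mem_idlsAvoid]
      constructor
      · refine ⟨Finset.filter_subset _ _, ?_, ?_, ?_, ?_⟩
        · simp only [Finset.mem_filter]
          exact ⟨hS.1, by rw [hh.2]; exact Set.notMem_empty t⟩
        · intro z hz y hy hzy
          simp only [Finset.mem_filter] at hy ⊢
          exact ⟨hz, fun hc => hy.2 (hom_mono hh hzy hc)⟩
        · intro z hz y hy
          simp only [Finset.mem_filter] at hz hy ⊢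
          refine ⟨hS.2 hz.1 hy.1, ?_⟩
          rw [hh.1]
          intro hc
          rcases hc with hc | hc
          · exact hz.2 hc
          · exact hy.2 hc
        · intro hc
          have := hc ▸ hx
          simp only [Finset.mem_filter] at this
          exact this.2 ht
      · simp only [Finset.mem_filter, not_and, not_not]
        exact fun _ => ht
    · rw [mem_fininf]
      intro y hy
      simp only [Finset.mem_sdiff, Finset.mem_filter, not_and, not_not] at hy
      exact hy.2 hy.1
  · intro t ht
    rw [mem_finsup] at ht
    obtain ⟨I, hI, htI⟩ := ht
    rw [mem_idlsAvoid] at hI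
    rw [mem_fininf] at htI
    exact htI x (Finset.mem_sdiff.mpr ⟨hx, hI.2⟩)

theorem coverSet_sup' {E : Type w} [SemilatticeSup E] [OrderBot E]
    (S : Finset X) (hS : IsSubSL S) (x : X) (vB : X → E) (vA : Atom X → E) :
    (coverSet S hS x).sup (Sum.elim vB vA) =
      (idlsAvoid S x).attach.sup
        (fun I => vA ⟨S, I.1, hS, (mem_idlsAvoid.mp I.2).1⟩) := by
  classical
  rw [coverSet, Finset.sup_image]
  rfl

theorem canon_hcov (h : X → Set ι) (hh : IsSupBotHom h) :
    ∀ (S : Finset X) (hS : IsSubSL S) (x : X), x ∈ S →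
      h x = (coverSet S hS x).sup (Sum.elim h (canonA h)) := by
  intro S hS x hx
  rw [coverSet_sup']
  have : (fun I : {I // I ∈ idlsAvoid S x} =>
      canonA h ⟨S, I.1, hS, (mem_idlsAvoid.mp I.2).1⟩) = fun I => (S \ I.1).inf h := rfl
  rw [this]
  rw [show (idlsAvoid S x).attach.sup (fun I => (S \ (I : Finset X)).inf h)
      = (idlsAvoid S x).sup (fun I => (S \ I).inf h) from
    Finset.sup_attach (idlsAvoid S x) (fun I => (S \ I).inf h)]
  exact canon_cover h hh S hS x hx

/-- canonical extension of a `Set`-valued hom along `emb` -/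
def extendHom (h : X → Set ι) (hh : IsSupBotHom h) : Next X → Set ι :=
  nextLift h (canonA h) hh (canon_hcov h hh)

theorem extendHom_hom (h : X → Set ι) (hh : IsSupBotHom h) : IsSupBotHom (extendHom h hh) :=
  nextLift_hom _ _ _ _

theorem extendHom_emb (h : X → Set ι) (hh : IsSupBotHom h) (b : X) :
    extendHom h hh (emb X b) = h b := nextLift_emb _ _ _ _ _

/-! ### Extension of a partial hom on a finite subsemilattice into a powerset -/

section Partial

variable (S : Finset X) (hS : IsSubSL S) (f : X → Set ι)

/-- the canonical extension: intersection over all join-covers from `S` -/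
def pExt : X → Set ι := fun x =>
  ⋂ (T : {T : Finset X // T ⊆ S ∧ x ≤ T.sup id}), ((T.1.sup f : Set ι))

theorem pExt_mono : Monotone (pExt S f) := by
  intro x y hxy
  refine Set.subset_iInter fun T => ?_
  exact Set.iInter_subset_of_subset ⟨T.1, T.2.1, le_trans hxy T.2.2⟩ le_rfl

theorem pExt_hom (hf0 : f ⊥ = ∅) : IsSupBotHom (pExt S f) := by
  constructor
  · intro x y
    show pExt S f (x ⊔ y) = pExt S f x ∪ pExt S f y
    apply Set.eq_of_subset_of_subset
    · intro t ht
      by_contra hc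
      simp only [Set.mem_union, not_or] at hc
      obtain ⟨hcx, hcy⟩ := hc
      rw [pExt, Set.mem_iInter] at hcx hcy ht
      push_neg at hcx hcy
      obtain ⟨Tx, hTx⟩ := hcx
      obtain ⟨Ty, hTy⟩ := hcy
      have hT : (Tx.1 ∪ Ty.1) ⊆ S := Finset.union_subset Tx.2.1 Ty.2.1
      have hle : x ⊔ y ≤ (Tx.1 ∪ Ty.1).sup id := by
        classical
        rw [Finset.sup_union]
        exact sup_le_sup Tx.2.2 Ty.2.2
      have := ht ⟨Tx.1 ∪ Ty.1, hT, hle⟩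
      classical
      rw [Finset.sup_union] at this
      rcases this with h | h
      · exact hTx h
      · exact hTy h
    · exact Set.union_subset (pExt_mono S f le_sup_left) (pExt_mono S f le_sup_right)
  · apply Set.eq_of_subset_of_subset
    · refine Set.iInter_subset_of_subset ⟨∅, Finset.empty_subset S, by simp⟩ ?_
      simp [hf0]
    · simp

theorem pSup_eq (hS : IsSubSL S) (hf0 : f ⊥ = ∅)
    (hfj : ∀ ⦃x⦄, x ∈ S → ∀ ⦃y⦄, y ∈ S → f (x ⊔ y) = f x ∪ f y)
    {T : Finset X} (hT : T ⊆ S) : f (T.sup id) = T.sup f := by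
  classical
  induction T using Finset.induction with
  | empty => simpa using hf0
  | @insert a T ha ih =>
      have haS : a ∈ S := hT (Finset.mem_insert_self a T)
      have hTS : T ⊆ S := fun z hz => hT (Finset.mem_insert_of_mem hz)
      have hmem : T.sup id ∈ S := sup_mem_closed hS.1 hS.2 hTS
      rw [Finset.sup_insert, Finset.sup_insert, ← ih hTS]
      exact hfj haS hmem

theorem pExt_eq_on (hS : IsSubSL S) (hf0 : f ⊥ = ∅)
    (hfj : ∀ ⦃x⦄, x ∈ S → ∀ ⦃y⦄, y ∈ S → f (x ⊔ y) = f x ∪ f y)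
    (x : X) (hx : x ∈ S) : pExt S f x = f x := by
  apply Set.eq_of_subset_of_subset
  · exact Set.iInter_subset_of_subset ⟨{x}, Finset.singleton_subset_iff.mpr hx, by simp⟩
      (by simp)
  · refine Set.subset_iInter fun T => ?_
    obtain ⟨hTS, hle⟩ := T.2
    have hmem : T.1.sup id ∈ S := sup_mem_closed hS.1 hS.2 hTS
    have hmono : f x ⊆ f (T.1.sup id) := by
      have := hfj hx hmem
      rw [sup_eq_right.mpr hle] at this
      rw [this]
      exact Set.subset_union_left
    rw [← pSup_eq S f hS hf0 hfj hTS]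
    exact hmono

end Partial

end UB
/-! ### The measure lemma (uses distributivity of `D`) -/

namespace UB

variable {D : Type v} [SemilatticeSup D] [OrderBot D]

theorem foldr_sup_le {l : List D} {z : D} (h : ∀ a ∈ l, a ≤ z) :
    l.foldr (· ⊔ ·) ⊥ ≤ z := by
  induction l with
  | nil => exact bot_le
  | cons a l ih =>
      exact sup_le (h a List.mem_cons_self) (ih fun b hb => h b (List.mem_cons_of_mem _ hb))

theorem le_foldr_sup {l : List D} {a : D} (h : a ∈ l) : a ≤ l.foldr (· ⊔ ·) ⊥ := by
  induction l with
  | nil => exact absurd h List.not_mem_nil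
  | cons b l ih =>
      rcases List.mem_cons.mp h with rfl | h
      · exact le_sup_left
      · exact le_trans (ih h) le_sup_right

variable {X : Type u} [SemilatticeSup X] [OrderBot X]

/-- Inner telescoping step. -/
theorem inner_split (hD : SupDistrib D) (μ : X → D) (hμ : IsSupBotHom μ)
    (Xs : Finset X) (istar : X) (Y : Finset X)
    (htr : ∀ y ∈ Y, ∃ x' ∈ Xs, x' ≤ istar ⊔ y) (d : D) (hd : ∀ x ∈ Xs, d ≤ μ x) :
    ∃ c e : D, d = c ⊔ e ∧ c ≤ d ∧ e ≤ μ istar ∧ ∀ y ∈ Y, c ≤ μ y := by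
  classical
  induction Y using Finset.induction with
  | empty => exact ⟨d, ⊥, (sup_bot_eq d).symm, le_rfl, bot_le, by simp⟩
  | @insert a Y ha ih =>
      obtain ⟨c, e, hce, hcd, he, hcY⟩ := ih (fun y hy => htr y (Finset.mem_insert_of_mem hy))
      obtain ⟨x', hx', hx'le⟩ := htr a (Finset.mem_insert_self a Y)
      have hcμ : c ≤ μ istar ⊔ μ a := by
        refine le_trans (le_trans hcd (hd x' hx')) ?_
        rw [← hμ.1]
        exact hom_mono hμ hx'le
      obtain ⟨p, q, hp, hq, hpq⟩ := hD (μ istar) (μ a) c hcμ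
      refine ⟨q, e ⊔ p, ?_, ?_, sup_le he hp, ?_⟩
      · rw [hce, hpq]
        rw [sup_comm p q, sup_assoc, sup_comm p e]
      · refine le_trans ?_ hcd
        rw [hpq]; exact le_sup_right
      · intro y hy
        rcases Finset.mem_insert.mp hy with rfl | hy
        · exact hq
        · exact le_trans (by rw [hpq]; exact le_sup_right) (hcY y hy)

/-- The core covering claim, by induction on the room above `Xs`. -/
theorem core_claim (hD : SupDistrib D) (μ : X → D) (hμ : IsSupBotHom μ)
    (S : Finset X) (hS : IsSubSL S) :
    ∀ (k : ℕ) (Xs : Finset X), Xs ⊆ S → ⊥ ∉ Xs → Xs.Nonempty → S.card - Xs.card ≤ k →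
    ∀ d : D, (∀ x ∈ Xs, d ≤ μ x) →
    ∃ L : List (Finset X × D),
      (∀ p ∈ L, (IsIdl S p.1 ∧ ∀ x ∈ Xs, x ∉ p.1) ∧ ∀ y ∈ S, y ∉ p.1 → p.2 ≤ μ y) ∧
      d ≤ (L.map Prod.snd).foldr (· ⊔ ·) ⊥ := by
  classical
  intro k
  induction k with
  | zero =>
      intro Xs hXsS hbot hne hcard d hd
      exfalso
      have hss : Xs ⊂ S := ⟨hXsS, fun h => hbot (h hS.1)⟩
      have hlt := Finset.card_lt_card hss
      exact Nat.lt_irrefl 0 (lt_of_lt_of_le (Nat.sub_pos_of_lt hlt) hcard)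
  | succ k ih =>
      intro Xs hXsS hbot hne hcard d hd
      -- the family of proper ideals avoiding Xs
      set 𝓘 : Finset (Finset X) :=
        S.powerset.filter (fun I => IsIdl S I ∧ ∀ x ∈ Xs, x ∉ I) with h𝓘
      have hbot𝓘 : ({⊥} : Finset X) ∈ 𝓘 := by
        rw [h𝓘, Finset.mem_filter, Finset.mem_powerset]
        obtain ⟨x₀, hx₀⟩ := hne
        refine ⟨Finset.singleton_subset_iff.mpr hS.1, ⟨Finset.singleton_subset_iff.mpr hS.1,
          Finset.mem_singleton_self ⊥, ?_, ?_, ?_⟩, ?_⟩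
        · intro x _ y hy hxy
          rw [Finset.mem_singleton] at hy ⊢
          rw [hy] at hxy
          exact le_bot_iff.mp hxy
        · intro x hx y hy
          rw [Finset.mem_singleton] at hx hy ⊢
          rw [hx, hy, sup_idem]
        · intro hc
          have : x₀ ∈ ({⊥} : Finset X) := hc ▸ hXsS hx₀
          rw [Finset.mem_singleton] at this
          exact hbot (this ▸ hx₀)
        · intro x hx hc
          rw [Finset.mem_singleton] at hc
          exact hbot (hc ▸ hx)
      obtain ⟨I, hI𝓘, hImax⟩ : ∃ I ∈ 𝓘, ∀ J ∈ 𝓘, ¬ I < J := by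
        obtain ⟨I, hI⟩ := Finset.exists_maximal (s := 𝓘) ⟨_, hbot𝓘⟩
        exact ⟨I, hI.1, fun J hJ hlt => lt_irrefl _ (hlt.trans_le (hI.2 hJ hlt.le))⟩
      rw [h𝓘, Finset.mem_filter, Finset.mem_powerset] at hI𝓘
      obtain ⟨hIS, hIdl, hIXs⟩ := hI𝓘
      set istar := I.sup id with histar
      have histarI : istar ∈ I := sup_mem_closed hIdl.2.1 hIdl.2.2.2.1 (subset_refl I)
      -- transfer property from maximality
      have htr : ∀ y ∈ S, y ∉ I → ∃ x' ∈ Xs, x' ≤ istar ⊔ y := by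
        intro y hyS hyI
        set J : Finset X := S.filter (fun z => z ≤ istar ⊔ y) with hJ
        have hIJ : I ⊂ J := by
          constructor
          · intro i hi
            rw [hJ, Finset.mem_filter]
            exact ⟨hIdl.1 hi, le_trans (Finset.le_sup (f := id) hi) le_sup_left⟩
          · intro hc
            have : y ∈ J := by
              rw [hJ, Finset.mem_filter]
              exact ⟨hyS, le_sup_right⟩
            exact hyI (hc this)
        have hJ𝓘 : J ∉ 𝓘 := fun h => hImax J h hIJ
        rw [h𝓘, Finset.mem_filter, Finset.mem_powerset] at hJ𝓘
        push_neg at hJ𝓘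
        by_cases hJS : J = S
        · obtain ⟨x₀, hx₀⟩ := hne
          refine ⟨x₀, hx₀, ?_⟩
          have : x₀ ∈ J := hJS ▸ hXsS hx₀
          rw [hJ, Finset.mem_filter] at this
          exact this.2
        · have hJsub : J ⊆ S := Finset.filter_subset _ _
          have hJidl : IsIdl S J := by
            refine ⟨hJsub, ?_, ?_, ?_, hJS⟩
            · rw [hJ, Finset.mem_filter]
              exact ⟨hS.1, bot_le⟩
            · intro a haS b hb hab
              rw [hJ, Finset.mem_filter] at hb ⊢
              exact ⟨haS, le_trans hab hb.2⟩
            · intro a ha b hb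
              rw [hJ, Finset.mem_filter] at ha hb ⊢
              exact ⟨hS.2 ha.1 hb.1, sup_le ha.2 hb.2⟩
          obtain ⟨x', hx', hx'J⟩ := by
            have := hJ𝓘 hJsub hJidl
            exact this
          rw [hJ, Finset.mem_filter] at hx'J
          exact ⟨x', hx', hx'J.2⟩
      -- inner telescoping over S \ I
      obtain ⟨c, e, hce, hcd, heistar, hcY⟩ := inner_split hD μ hμ Xs istar (S \ I)
        (fun y hy => by
          rw [Finset.mem_sdiff] at hy
          exact htr y hy.1 hy.2) d hd
      have hIcond : (IsIdl S I ∧ ∀ x ∈ Xs, x ∉ I) ∧ ∀ y ∈ S, y ∉ I → c ≤ μ y := by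
        exact ⟨⟨hIdl, hIXs⟩, fun y hyS hyI => hcY y (Finset.mem_sdiff.mpr ⟨hyS, hyI⟩)⟩
      by_cases histarbot : istar = ⊥
      · refine ⟨[(I, c)], ?_, ?_⟩
        · intro p hp
          rw [List.mem_singleton] at hp
          rw [hp]
          exact hIcond
        · have : e = ⊥ := le_bot_iff.mp (by
            have := heistar
            rw [histarbot, hμ.2] at this
            exact this)
          rw [hce, this, sup_bot_eq]
          simpa using le_sup_left
      · -- recurse with Xs ∪ {istar}
        have histarS : istar ∈ S := hIS histarI
        have histarXs : istar ∉ Xs := fun h => hIXs istar h histarI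
        have hcard' : S.card - (insert istar Xs).card ≤ k := by
          rw [Finset.card_insert_of_notMem histarXs, ← Nat.sub_sub]
          exact le_trans (Nat.sub_le_sub_right hcard 1) (le_of_eq (Nat.succ_sub_one k))
        have hd' : ∀ x ∈ insert istar Xs, e ≤ μ x := by
          intro x hx
          rcases Finset.mem_insert.mp hx with rfl | hx
          · exact heistar
          · exact le_trans (by rw [hce]; exact le_sup_right) (hd x hx)
        obtain ⟨L', hL', hdL'⟩ := ih (insert istar Xs)
          (Finset.insert_subset histarS hXsS)
          (by
            rw [Finset.mem_insert]
            rintro (h | h)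
            · exact histarbot h.symm
            · exact hbot h)
          ⟨istar, Finset.mem_insert_self _ _⟩ hcard' e hd'
        refine ⟨(I, c) :: L', ?_, ?_⟩
        · intro p hp
          rcases List.mem_cons.mp hp with rfl | hp
          · exact hIcond
          · obtain ⟨⟨h1, h2⟩, h3⟩ := hL' p hp
            exact ⟨⟨h1, fun x hx => h2 x (Finset.mem_insert_of_mem hx)⟩, h3⟩
        · rw [List.map_cons, List.foldr_cons, hce]
          exact sup_le_sup le_rfl hdL'

/-- The measure lemma: values on ideals implementing `μ` on `S`. -/
theorem measure_exists (hD : SupDistrib D) (μ : X → D) (hμ : IsSupBotHom μ)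
    (S : Finset X) (hS : IsSubSL S) :
    ∃ m : Finset X → D, ∀ x ∈ S, μ x = (idlsAvoid S x).sup m := by
  classical
  -- per-element lists
  have hLx : ∀ x : X, ∃ L : List (Finset X × D),
      (∀ p ∈ L, (IsIdl S p.1 ∧ x ∉ p.1) ∧ ∀ y ∈ S, y ∉ p.1 → p.2 ≤ μ y) ∧
      (x ∈ S → x ≠ ⊥ → μ x ≤ (L.map Prod.snd).foldr (· ⊔ ·) ⊥) := by
    intro x
    by_cases hx : x ∈ S ∧ x ≠ ⊥
    · obtain ⟨L, h1, h2⟩ := core_claim hD μ hμ S hS S.card {x}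
        (Finset.singleton_subset_iff.mpr hx.1)
        (by rw [Finset.mem_singleton]; exact fun h => hx.2 h.symm)
        ⟨x, Finset.mem_singleton_self x⟩ (Nat.sub_le _ _) (μ x)
        (fun z hz => by rw [Finset.mem_singleton] at hz; rw [hz])
      refine ⟨L, fun p hp => ?_, fun _ _ => h2⟩
      obtain ⟨⟨ha, hb⟩, hc⟩ := h1 p hp
      exact ⟨⟨ha, hb x (Finset.mem_singleton_self x)⟩, hc⟩
    · exact ⟨[], by simp, fun h1 h2 => absurd ⟨h1, h2⟩ hx⟩
  choose Lx hLx1 hLx2 using hLx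
  set LL : List (Finset X × D) := (S.toList.map Lx).flatten with hLL
  have hmemLL : ∀ p ∈ LL, ∃ x ∈ S, p ∈ Lx x := by
    intro p hp
    rw [hLL, List.mem_flatten] at hp
    obtain ⟨l, hl, hpl⟩ := hp
    rw [List.mem_map] at hl
    obtain ⟨x, hx, rfl⟩ := hl
    exact ⟨x, Finset.mem_toList.mp hx, hpl⟩
  set m : Finset X → D :=
    fun I => ((LL.filter (fun p => p.1 = I)).map Prod.snd).foldr (· ⊔ ·) ⊥ with hm
  refine ⟨m, fun x hxS => ?_⟩
  apply le_antisymm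
  · -- μ x ≤ sup
    by_cases hxbot : x = ⊥
    · rw [hxbot, hμ.2]; exact bot_le
    · refine le_trans (hLx2 x hxS hxbot) ?_
      apply foldr_sup_le
      intro a ha
      rw [List.mem_map] at ha
      obtain ⟨p, hp, rfl⟩ := ha
      have hpLL : p ∈ LL := by
        rw [hLL, List.mem_flatten]
        exact ⟨Lx x, List.mem_map.mpr ⟨x, Finset.mem_toList.mpr hxS, rfl⟩, hp⟩
      have h1 := hLx1 x p hp
      have hpm : p.2 ≤ m p.1 := by
        rw [hm]
        apply le_foldr_sup
        rw [List.mem_map]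
        exact ⟨p, List.mem_filter.mpr ⟨hpLL, by simp⟩, rfl⟩
      refine le_trans hpm (Finset.le_sup ?_)
      rw [mem_idlsAvoid]
      exact ⟨h1.1.1, h1.1.2⟩
  · -- sup ≤ μ x
    apply Finset.sup_le
    intro I hI
    rw [mem_idlsAvoid] at hI
    rw [hm]
    apply foldr_sup_le
    intro a ha
    rw [List.mem_map] at ha
    obtain ⟨p, hp, rfl⟩ := ha
    rw [List.mem_filter] at hp
    obtain ⟨hpLL, hpI⟩ := hp
    obtain ⟨x', hx', hpx'⟩ := hmemLL p hpLL
    have := (hLx1 x' p hpx').2 x hxS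
    have hIp : x ∉ p.1 := by
      have : p.1 = I := by simpa using hpI
      rw [this]; exact hI.2
    exact (hLx1 x' p hpx').2 x hxS hIp

end UB
/-! ### The tower and its colimit -/

namespace UB

variable (D : Type u) [SemilatticeSup D] [OrderBot D]

def Lev : ℕ → SL.{u}
  | 0 => ⟨D⟩
  | n + 1 => ⟨Next (Lev n).carrier⟩

abbrev LevC (n : ℕ) : Type u := (Lev D n).carrier

theorem levc_zero : LevC D 0 = D := rfl
theorem levc_succ (n : ℕ) : LevC D (n + 1) = Next (LevC D n) := rfl

def stepEmb (n : ℕ) : LevC D n → LevC D (n + 1) := emb (LevC D n)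

theorem stepEmb_hom (n : ℕ) : IsSupBotHom (stepEmb D n) := emb_hom

def iota {n m : ℕ} (h : n ≤ m) : LevC D n → LevC D m :=
  Nat.leRecOn h (fun {k} f => stepEmb D k ∘ f) id

theorem iota_self (n : ℕ) (x : LevC D n) : iota D (le_refl n) x = x := by
  rw [iota, Nat.leRecOn_self]
  rfl

theorem iota_succ {n m : ℕ} (h : n ≤ m) (h2 : n ≤ m + 1) (x : LevC D n) :
    iota D h2 x = stepEmb D m (iota D h x) := by
  rw [iota, iota, Nat.leRecOn_succ h]
  rfl

theorem iota_trans {n m k : ℕ} (h1 : n ≤ m) (h2 : m ≤ k) (x : LevC D n) :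
    iota D h2 (iota D h1 x) = iota D (h1.trans h2) x := by
  induction k, h2 using Nat.le_induction with
  | base => rw [iota_self]
  | succ k h2 ih =>
      rw [iota_succ D h2 (h2.trans (Nat.le_succ k)), ih,
        iota_succ D (h1.trans h2) (h1.trans (h2.trans (Nat.le_succ k)))]

theorem iota_hom {n m : ℕ} (h : n ≤ m) : IsSupBotHom (iota D h) := by
  induction m, h using Nat.le_induction with
  | base =>
      constructor
      · intro a b; rw [iota_self, iota_self, iota_self]
      · rw [iota_self]
  | succ m h ih =>
      constructor
      · intro a b
        rw [iota_succ D h, iota_succ D h, iota_succ D h, ih.1, (stepEmb_hom D m).1]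
      · rw [iota_succ D h, ih.2, (stepEmb_hom D m).2]

/-- the colimit relation -/
def colRel (a b : Σ n, LevC D n) : Prop :=
  ∃ (k : ℕ) (h1 : a.1 ≤ k) (h2 : b.1 ≤ k), iota D h1 a.2 = iota D h2 b.2

theorem colRel_equiv : Equivalence (colRel D) := by
  constructor
  · exact fun a => ⟨a.1, le_rfl, le_rfl, rfl⟩
  · rintro a b ⟨k, h1, h2, h⟩
    exact ⟨k, h2, h1, h.symm⟩
  · rintro a b c ⟨k, h1, h2, h⟩ ⟨l, h3, h4, h'⟩
    refine ⟨max k l, h1.trans (le_max_left k l), h4.trans (le_max_right k l), ?_⟩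
    rw [← iota_trans D h1 (le_max_left k l), ← iota_trans D h4 (le_max_right k l), h, ← h',
      iota_trans, iota_trans]

def colSetoid : Setoid (Σ n, LevC D n) := ⟨colRel D, colRel_equiv D⟩

def Colim : Type u := Quotient (colSetoid D)

def cmk (n : ℕ) (x : LevC D n) : Colim D := Quotient.mk (colSetoid D) ⟨n, x⟩

theorem cmk_iota {n m : ℕ} (h : n ≤ m) (x : LevC D n) :
    cmk D m (iota D h x) = cmk D n x := by
  refine Quotient.sound ⟨m, le_rfl, h, ?_⟩
  rw [iota_self]

def presup (a b : Σ n, LevC D n) : Colim D :=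
  cmk D (max a.1 b.1)
    (iota D (le_max_left a.1 b.1) a.2 ⊔ iota D (le_max_right a.1 b.1) b.2)

theorem presup_push (a b : Σ n, LevC D n) (K : ℕ) (h1 : a.1 ≤ K) (h2 : b.1 ≤ K) :
    presup D a b = cmk D K (iota D h1 a.2 ⊔ iota D h2 b.2) := by
  rcases le_total (max a.1 b.1) K with hK | hK
  · rw [presup, ← cmk_iota D hK, (iota_hom D hK).1, iota_trans, iota_trans]
  · rw [presup, ← cmk_iota D hK (iota D h1 a.2 ⊔ iota D h2 b.2), (iota_hom D hK).1,
      iota_trans, iota_trans]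

instance : Max (Colim D) :=
  ⟨Quotient.lift₂ (presup D) (by
    rintro a b a' b' ⟨k, hk1, hk2, hk⟩ ⟨l, hl1, hl2, hl⟩
    set K := max k l with hK
    rw [presup_push D a b K (hk1.trans (le_max_left k l)) (hl1.trans (le_max_right k l)),
      presup_push D a' b' K (hk2.trans (le_max_left k l)) (hl2.trans (le_max_right k l))]
    rw [← iota_trans D hk1 (le_max_left k l), ← iota_trans D hl1 (le_max_right k l), hk, hl,
      iota_trans, iota_trans])⟩

theorem colim_sup_def (n : ℕ) (x y : LevC D n) :
    (cmk D n x ⊔ cmk D n y : Colim D) = cmk D n (x ⊔ y) := by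
  show presup D ⟨n, x⟩ ⟨n, y⟩ = _
  rw [presup_push D ⟨n, x⟩ ⟨n, y⟩ n le_rfl le_rfl, iota_self, iota_self]

theorem colim_sup_def' (a b : Σ n, LevC D n) :
    (Quotient.mk (colSetoid D) a ⊔ Quotient.mk (colSetoid D) b : Colim D) = presup D a b := rfl

theorem cmk_sup_cmk {n m : ℕ} (x : LevC D n) (y : LevC D m) (K : ℕ) (hn : n ≤ K) (hm : m ≤ K) :
    (cmk D n x ⊔ cmk D m y : Colim D) = cmk D K (iota D hn x ⊔ iota D hm y) :=
  presup_push D ⟨n, x⟩ ⟨m, y⟩ K hn hm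

instance : SemilatticeSup (Colim D) := by
  refine SemilatticeSup.mk' ?_ ?_ ?_
  · intro x y
    refine Quotient.inductionOn₂ x y fun a b => ?_
    show (cmk D a.1 a.2 ⊔ cmk D b.1 b.2 : Colim D) = cmk D b.1 b.2 ⊔ cmk D a.1 a.2
    rw [cmk_sup_cmk D a.2 b.2 (max a.1 b.1) (le_max_left _ _) (le_max_right _ _),
      cmk_sup_cmk D b.2 a.2 (max a.1 b.1) (le_max_right _ _) (le_max_left _ _)]
    exact congrArg _ (sup_comm _ _)
  · intro x y z
    refine Quotient.inductionOn₃ x y z fun a b c => ?_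
    have ha : a.1 ≤ max (max a.1 b.1) c.1 := (le_max_left _ _).trans (le_max_left _ _)
    have hb : b.1 ≤ max (max a.1 b.1) c.1 := (le_max_right _ _).trans (le_max_left _ _)
    have hc : c.1 ≤ max (max a.1 b.1) c.1 := le_max_right _ _
    show ((cmk D a.1 a.2 ⊔ cmk D b.1 b.2) ⊔ cmk D c.1 c.2 : Colim D)
      = cmk D a.1 a.2 ⊔ (cmk D b.1 b.2 ⊔ cmk D c.1 c.2)
    rw [cmk_sup_cmk D a.2 b.2 _ ha hb, cmk_sup_cmk D _ c.2 _ le_rfl hc, iota_self,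
      cmk_sup_cmk D b.2 c.2 _ hb hc, cmk_sup_cmk D a.2 _ _ ha le_rfl, iota_self]
    exact congrArg _ (sup_assoc _ _ _)
  · intro x
    refine Quotient.inductionOn x fun a => ?_
    show (cmk D a.1 a.2 ⊔ cmk D a.1 a.2 : Colim D) = cmk D a.1 a.2
    rw [colim_sup_def]
    exact congrArg _ (sup_idem _)

instance : OrderBot (Colim D) where
  bot := cmk D 0 ⊥
  bot_le := fun x => by
    refine Quotient.inductionOn x fun a => ?_
    show (cmk D 0 ⊥ ⊔ cmk D a.1 a.2 : Colim D) = cmk D a.1 a.2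
    rw [show (cmk D 0 ⊥ ⊔ cmk D a.1 a.2 : Colim D) = presup D ⟨0, ⊥⟩ ⟨a.1, a.2⟩ from rfl,
      presup_push D _ _ a.1 (Nat.zero_le a.1) le_rfl, iota_self, (iota_hom D (Nat.zero_le a.1)).2,
      bot_sup_eq]

theorem cmk_hom (n : ℕ) : IsSupBotHom (cmk D n) := by
  constructor
  · intro a b
    erw [colim_sup_def]
  · show cmk D n ⊥ = cmk D 0 ⊥
    rw [← (iota_hom D (Nat.zero_le n)).2, cmk_iota]

theorem exists_repr (z : Colim D) (N : ℕ) : ∃ (m : ℕ) (x : LevC D m), N ≤ m ∧ z = cmk D m x := by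
  refine Quotient.inductionOn z fun a => ?_
  rcases le_total a.1 N with h | h
  · exact ⟨N, iota D h a.2, le_rfl, (cmk_iota D h a.2).symm⟩
  · exact ⟨a.1, a.2, h, rfl⟩

end UB
/-! ### The retraction onto `D` -/

namespace UB

variable {D : Type u} [SemilatticeSup D] [OrderBot D]

section Mu

variable (hD : SupDistrib D)

variable {X : Type u} [SemilatticeSup X] [OrderBot X]

/-- chosen measures on atoms -/
def muVA (μ : X → D) (hμ : IsSupBotHom μ) : Atom X → D :=
  fun a => Classical.choose (measure_exists hD μ hμ a.S a.hS) a.I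

theorem mu_hcov (μ : X → D) (hμ : IsSupBotHom μ) :
    ∀ (S : Finset X) (hS : IsSubSL S) (x : X), x ∈ S →
      μ x = (coverSet S hS x).sup (Sum.elim μ (muVA hD μ hμ)) := by
  intro S hS x hx
  rw [coverSet_sup']
  have h1 : (fun I : {I // I ∈ idlsAvoid S x} =>
      muVA hD μ hμ ⟨S, I.1, hS, (mem_idlsAvoid.mp I.2).1⟩)
      = fun I => Classical.choose (measure_exists hD μ hμ S hS) I.1 := rfl
  rw [h1]
  rw [show ((idlsAvoid S x).attach.sup
      (fun I => Classical.choose (measure_exists hD μ hμ S hS) I.1))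
      = (idlsAvoid S x).sup (Classical.choose (measure_exists hD μ hμ S hS)) from
    Finset.sup_attach _ _]
  exact Classical.choose_spec (measure_exists hD μ hμ S hS) x hx

def muStep (μ : X → D) (hμ : IsSupBotHom μ) : Next X → D :=
  nextLift μ (muVA hD μ hμ) hμ (mu_hcov hD μ hμ)

theorem muStep_hom (μ : X → D) (hμ : IsSupBotHom μ) : IsSupBotHom (muStep hD μ hμ) :=
  nextLift_hom _ _ _ _

theorem muStep_emb (μ : X → D) (hμ : IsSupBotHom μ) (b : X) :
    muStep hD μ hμ (emb X b) = μ b := nextLift_emb _ _ _ _ _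

/-- the retractions at every level -/
def Mu : ∀ n : ℕ, {f : LevC D n → D // IsSupBotHom f}
  | 0 => ⟨fun x => x, hom_id⟩
  | n + 1 => ⟨muStep hD (Mu n).1 (Mu n).2, muStep_hom hD _ _⟩

theorem Mu_step (n : ℕ) (x : LevC D n) :
    (Mu hD (n + 1)).1 (stepEmb D n x) = (Mu hD n).1 x := muStep_emb hD _ _ _

theorem Mu_iota {n m : ℕ} (h : n ≤ m) (x : LevC D n) :
    (Mu hD m).1 (iota D h x) = (Mu hD n).1 x := by
  induction m, h using Nat.le_induction with
  | base => rw [iota_self]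
  | succ m h ih => rw [iota_succ D h, Mu_step, ih]

/-- the retraction on the colimit -/
def muInf : Colim D → D :=
  Quotient.lift (fun a : Σ n, LevC D n => (Mu hD a.1).1 a.2) (by
    rintro a b ⟨k, h1, h2, h⟩
    show (Mu hD a.1).1 a.2 = (Mu hD b.1).1 b.2
    rw [← Mu_iota hD h1 a.2, ← Mu_iota hD h2 b.2, h])

theorem muInf_cmk (n : ℕ) (x : LevC D n) : muInf hD (cmk D n x) = (Mu hD n).1 x := rfl

theorem muInf_hom : IsSupBotHom (muInf hD) := by
  constructor
  · intro a b
    obtain ⟨n, x, -, rfl⟩ := exists_repr D a 0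
    obtain ⟨m, y, -, rfl⟩ := exists_repr D b 0
    erw [cmk_sup_cmk D x y (max n m) (le_max_left n m) (le_max_right n m)]
    rw [muInf_cmk, muInf_cmk, muInf_cmk, (Mu hD (max n m)).2.1, Mu_iota, Mu_iota]
  · show (Mu hD 0).1 ⊥ = ⊥
    rfl

theorem muInf_eps (d : D) : muInf hD (cmk D 0 d) = d := rfl

end Mu

/-! ### Extending `Set`-valued homs to the colimit -/

section ExtInf

variable {ι : Type u} {n : ℕ}

def extStepB {k : ℕ} (g : {f : LevC D k → Set ι // IsSupBotHom f}) :
    {f : LevC D (k + 1) → Set ι // IsSupBotHom f} :=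
  ⟨extendHom g.1 g.2, extendHom_hom g.1 g.2⟩

theorem extStepB_emb {k : ℕ} (g : {f : LevC D k → Set ι // IsSupBotHom f}) (x : LevC D k) :
    (extStepB g).1 (stepEmb D k x) = g.1 x := extendHom_emb g.1 g.2 x

/-- extend a hom upward along the tower -/
def ExtT (h : {f : LevC D n → Set ι // IsSupBotHom f}) {m : ℕ} (hm : n ≤ m) :
    {f : LevC D m → Set ι // IsSupBotHom f} :=
  Nat.leRecOn hm (fun {_} g => extStepB g) h

theorem ExtT_self (h : {f : LevC D n → Set ι // IsSupBotHom f}) :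
    ExtT h (le_refl n) = h := by
  rw [ExtT, Nat.leRecOn_self]

theorem ExtT_succ (h : {f : LevC D n → Set ι // IsSupBotHom f}) {m : ℕ} (hm : n ≤ m)
    (hm2 : n ≤ m + 1) (x : LevC D m) :
    (ExtT h hm2).1 (stepEmb D m x) = (ExtT h hm).1 x := by
  rw [ExtT, ExtT, Nat.leRecOn_succ hm]
  exact extStepB_emb _ x

theorem ExtT_iota (h : {f : LevC D n → Set ι // IsSupBotHom f}) {m k : ℕ} (hm : n ≤ m)
    (hk : m ≤ k) (x : LevC D m) :
    (ExtT h (hm.trans hk)).1 (iota D hk x) = (ExtT h hm).1 x := by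
  induction k, hk using Nat.le_induction with
  | base => rw [iota_self]
  | succ k hk ih =>
      rw [iota_succ D hk, ExtT_succ h (hm.trans hk) (hm.trans (hk.trans (Nat.le_succ k))), ih]

/-- extend a hom from level `n` to the colimit -/
def extInf (h : {f : LevC D n → Set ι // IsSupBotHom f}) : Colim D → Set ι :=
  Quotient.lift (fun a : Σ k, LevC D k =>
    (ExtT h (le_max_right a.1 n)).1 (iota D (le_max_left a.1 n) a.2)) (by
      rintro a b ⟨k, h1, h2, hab⟩
      have hka : max a.1 n ≤ max k n := max_le_max h1 le_rfl
      have hkb : max b.1 n ≤ max k n := max_le_max h2 le_rfl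
      rw [← ExtT_iota h (le_max_right a.1 n) hka, ← ExtT_iota h (le_max_right b.1 n) hkb]
      have e1 : (ExtT h ((le_max_right a.1 n).trans hka)) = (ExtT h (le_max_right k n)) := rfl
      have e2 : (ExtT h ((le_max_right b.1 n).trans hkb)) = (ExtT h (le_max_right k n)) := rfl
      rw [e1, e2]
      congr 1
      rw [iota_trans, iota_trans]
      have e3 : iota D ((le_max_left a.1 n).trans hka) a.2
          = iota D (h1.trans (le_max_left k n)) a.2 := rfl
      have e4 : iota D ((le_max_left b.1 n).trans hkb) b.2
          = iota D (h2.trans (le_max_left k n)) b.2 := rfl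
      rw [e3, e4, ← iota_trans D h1 (le_max_left k n), ← iota_trans D h2 (le_max_left k n), hab])

theorem extInf_cmk (h : {f : LevC D n → Set ι // IsSupBotHom f}) (x : LevC D n) :
    extInf h (cmk D n x) = h.1 x := by
  show (ExtT h (le_max_right n n)).1 (iota D (le_max_left n n) x) = h.1 x
  have h1 := ExtT_iota h (le_refl n) (le_max_left n n) x
  have h2 : (ExtT h (le_max_right n n)).1 (iota D (le_max_left n n) x)
      = (ExtT h ((le_refl n).trans (le_max_left n n))).1 (iota D (le_max_left n n) x) := rfl
  rw [h2, h1, ExtT_self]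

theorem extInf_hom (h : {f : LevC D n → Set ι // IsSupBotHom f}) :
    IsSupBotHom (extInf h) := by
  constructor
  · intro a b
    obtain ⟨p, x, -, rfl⟩ := exists_repr D a 0
    obtain ⟨q, y, -, rfl⟩ := exists_repr D b 0
    erw [cmk_sup_cmk D x y (max p q) (le_max_left p q) (le_max_right p q)]
    show (ExtT h (le_max_right (max p q) n)).1 (iota D (le_max_left (max p q) n) _)
      = (ExtT h (le_max_right p n)).1 (iota D (le_max_left p n) x)
        ⊔ (ExtT h (le_max_right q n)).1 (iota D (le_max_left q n) y)
    rw [(iota_hom D (le_max_left (max p q) n)).1, (ExtT h (le_max_right (max p q) n)).2.1]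
    congr 1
    · rw [iota_trans]
      rw [← ExtT_iota h (le_max_right p n) (max_le_max (le_max_left p q) le_rfl)]
      have e1 : (ExtT h ((le_max_right p n).trans (max_le_max (le_max_left p q) le_rfl)))
          = (ExtT h (le_max_right (max p q) n)) := rfl
      rw [e1]
      congr 1
      rw [iota_trans]
    · rw [iota_trans]
      rw [← ExtT_iota h (le_max_right q n) (max_le_max (le_max_right p q) le_rfl)]
      have e1 : (ExtT h ((le_max_right q n).trans (max_le_max (le_max_right p q) le_rfl)))
          = (ExtT h (le_max_right (max p q) n)) := rfl
      rw [e1]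
      congr 1
      rw [iota_trans]
  · show (ExtT h (le_max_right 0 n)).1 (iota D (le_max_left 0 n) ⊥) = ⊥
    rw [(iota_hom D (le_max_left 0 n)).2, (ExtT h (le_max_right 0 n)).2.2]

end ExtInf

end UB
/-! ### Boolean pieces -/

namespace UB

section Pieces

variable {X : Type u} [SemilatticeSup X] [OrderBot X]

abbrev IdlSub (S : Finset X) : Type u := {I : Finset X // IsIdl S I}

noncomputable instance (S : Finset X) : Fintype (IdlSub S) :=
  Fintype.ofInjective (fun I : IdlSub S => (⟨I.1, Finset.mem_powerset.mpr I.2.1⟩ :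
    {T // T ∈ S.powerset})) (by
      intro a b h
      apply Subtype.ext
      simpa using congrArg Subtype.val h)

def gammaF (S : Finset X) (hS : IsSubSL S) : Finset (IdlSub S) → Next X := fun U =>
  pmk (Rels X) (U.image (fun I => Sum.inr ⟨S, I.1, hS, I.2⟩))

theorem gammaF_hom (S : Finset X) (hS : IsSubSL S) : IsSupBotHom (gammaF S hS) := by
  constructor
  · intro U V
    show _ = pmk (Rels X) _ ⊔ pmk (Rels X) _
    rw [pres_sup_def, gammaF, Finset.sup_eq_union, Finset.image_union]
  · show _ = pmk (Rels X) ∅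
    rw [gammaF, Finset.bot_eq_empty, Finset.image_empty]

def epsS (S : Finset X) (x : X) : Finset (IdlSub S) :=
  (idlsAvoid S x).attach.image (fun I => ⟨I.1, (mem_idlsAvoid.mp I.2).1⟩)

theorem mem_epsS {S : Finset X} {x : X} {J : IdlSub S} : J ∈ epsS S x ↔ x ∉ J.1 := by
  rw [epsS, Finset.mem_image]
  constructor
  · rintro ⟨I, -, rfl⟩
    exact (mem_idlsAvoid.mp I.2).2
  · intro h
    exact ⟨⟨J.1, mem_idlsAvoid.mpr ⟨J.2, h⟩⟩, Finset.mem_attach _ _, Subtype.ext rfl⟩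

theorem emb_eq_gamma (S : Finset X) (hS : IsSubSL S) {x : X} (hx : x ∈ S) :
    emb X x = gammaF S hS (epsS S x) := by
  rw [gammaF, epsS, Finset.image_image]
  exact emb_eq_cover hS hx

/-- the defining partial valuation for the retraction onto a piece -/
def fIdl (S : Finset X) : X → Set (IdlSub S) := fun x => {J | x ∉ J.1}

theorem fIdl_bot (S : Finset X) : fIdl S ⊥ = ∅ := by
  ext J
  simp only [fIdl, Set.mem_setOf_eq, Set.mem_empty_iff_false, iff_false, not_not]
  exact J.2.2.1

theorem fIdl_join (S : Finset X) :
    ∀ ⦃x⦄, x ∈ S → ∀ ⦃y⦄, y ∈ S → fIdl S (x ⊔ y) = fIdl S x ∪ fIdl S y := by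
  intro x hx y hy
  ext J
  simp only [fIdl, Set.mem_setOf_eq, Set.mem_union]
  constructor
  · intro h
    by_contra hc
    push_neg at hc
    exact h (J.2.2.2.2.1 hc.1 hc.2)
  · rintro (h | h) hc
    · exact h (J.2.2.2.1 hx hc le_sup_left)
    · exact h (J.2.2.2.1 hy hc le_sup_right)

def vBr (S : Finset X) : X → Set (IdlSub S) := pExt S (fIdl S)

theorem vBr_hom (S : Finset X) : IsSupBotHom (vBr S) := pExt_hom S (fIdl S) (fIdl_bot S)

theorem vBr_on (S : Finset X) (hS : IsSubSL S) (x : X) (hx : x ∈ S) : vBr S x = fIdl S x :=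
  pExt_eq_on S (fIdl S) hS (fIdl_bot S) (fIdl_join S) x hx

def vAr (S : Finset X) : Atom X → Set (IdlSub S) := fun a =>
  if h : a.S = S then {(⟨a.I, h ▸ a.hI⟩ : IdlSub S)} else canonA (vBr S) a

/-- sup of singleton-valued function equals the coercion -/
theorem sup_singleton_sets {κ : Type*} (U : Finset κ) :
    U.sup (fun I => ({I} : Set κ)) = ↑U := by
  ext t
  rw [mem_finsup]
  simp

theorem hcovr (S : Finset X) (hS : IsSubSL S) :
    ∀ (S' : Finset X) (hS' : IsSubSL S') (x : X), x ∈ S' →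
    vBr S x = (coverSet S' hS' x).sup (Sum.elim (vBr S) (vAr S)) := by
  intro S' hS' x hx
  by_cases hSS : S' = S
  · subst hSS
    rw [coverSet_sup']
    have hfun : (fun I : {I // I ∈ idlsAvoid S' x} =>
        vAr S' ⟨S', I.1, hS', (mem_idlsAvoid.mp I.2).1⟩)
        = fun I => ({(⟨I.1, (mem_idlsAvoid.mp I.2).1⟩ : IdlSub S')} : Set (IdlSub S')) := by
      funext I
      rw [vAr, dif_pos rfl]
    rw [hfun, vBr_on S' hS' x hx]
    ext t
    rw [mem_finsup]
    simp only [fIdl, Set.mem_setOf_eq]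
    constructor
    · intro h
      refine ⟨⟨t.1, mem_idlsAvoid.mpr ⟨t.2, h⟩⟩, Finset.mem_attach _ _, ?_⟩
      show t ∈ ({(⟨t.1, _⟩ : IdlSub S')} : Set (IdlSub S'))
      rw [Set.mem_singleton_iff]
    · rintro ⟨I, -, h⟩
      rw [Set.mem_singleton_iff] at h
      rw [h]
      exact (mem_idlsAvoid.mp I.2).2
  · rw [Finset.sup_congr rfl (g := Sum.elim (vBr S) (canonA (vBr S))) ?_]
    · exact canon_hcov (vBr S) (vBr_hom S) S' hS' x hx
    · intro g hg
      obtain ⟨I, hI, rfl⟩ := exists_of_mem_coverSet hg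
      show vAr S _ = canonA (vBr S) _
      rw [vAr, dif_neg hSS]

def retrN (S : Finset X) (hS : IsSubSL S) : Next X → Set (IdlSub S) :=
  nextLift (vBr S) (vAr S) (vBr_hom S) (hcovr S hS)

theorem retrN_hom (S : Finset X) (hS : IsSubSL S) : IsSupBotHom (retrN S hS) :=
  nextLift_hom _ _ _ _

theorem retrN_gamma (S : Finset X) (hS : IsSubSL S) (U : Finset (IdlSub S)) :
    retrN S hS (gammaF S hS U) = ↑U := by
  rw [retrN, gammaF, nextLift_pmk, Finset.sup_image]
  have hfun : (Sum.elim (vBr S) (vAr S) ∘ fun I : IdlSub S =>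
      (Sum.inr ⟨S, I.1, hS, I.2⟩ : Gen X)) = fun I => ({I} : Set (IdlSub S)) := by
    funext I
    show vAr S ⟨S, I.1, hS, I.2⟩ = {I}
    rw [vAr, dif_pos rfl]
  rw [hfun, sup_singleton_sets]

end Pieces

/-! ### Pieces in the colimit -/

section ColPieces

variable {D : Type u} [SemilatticeSup D] [OrderBot D]
variable (n : ℕ) (S : Finset (LevC D n)) (hS : IsSubSL S)

def phi : Finset (IdlSub S) → Colim D := fun U => cmk D (n + 1) (gammaF S hS U)

theorem phi_hom : IsSupBotHom (phi n S hS) :=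
  hom_comp (gammaF_hom S hS) (cmk_hom D (n + 1))

def retrB : {f : LevC D (n + 1) → Set (IdlSub S) // IsSupBotHom f} :=
  (⟨retrN S hS, retrN_hom S hS⟩ :
    {f : Next (LevC D n) → Set (IdlSub S) // IsSupBotHom f})

def retrInf : Colim D → Set (IdlSub S) := extInf (n := n + 1) (retrB n S hS)

theorem retrInf_phi (U : Finset (IdlSub S)) : retrInf n S hS (phi n S hS U) = ↑U := by
  rw [phi, retrInf]
  erw [extInf_cmk]
  exact retrN_gamma S hS U

theorem phi_le_iff {U V : Finset (IdlSub S)} :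
    phi n S hS U ≤ phi n S hS V ↔ U ⊆ V := by
  constructor
  · intro h
    have := hom_mono (extInf_hom (n := n + 1) (retrB n S hS)) h
    rw [show extInf (n := n + 1) (retrB n S hS) = retrInf n S hS from rfl,
      retrInf_phi, retrInf_phi] at this
    exact Finset.coe_subset.mp this
  · intro h
    exact hom_mono (phi_hom n S hS) h

theorem phi_inj : Function.Injective (phi n S hS) := by
  intro U V h
  exact Finset.Subset.antisymm ((phi_le_iff n S hS).mp h.le) ((phi_le_iff n S hS).mp h.ge)

def piece : Set (Colim D) := Set.range (phi n S hS)

theorem piece_subsemilat : IsSubSemilat (piece n S hS) := by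
  constructor
  · refine ⟨∅, ?_⟩
    rw [show (∅ : Finset (IdlSub S)) = ⊥ from rfl, (phi_hom n S hS).2]
  · rintro x ⟨U, rfl⟩ y ⟨V, rfl⟩
    exact ⟨U ∪ V, by rw [show U ∪ V = U ⊔ V from rfl, (phi_hom n S hS).1]⟩

theorem piece_finite : (piece n S hS).Finite := Set.finite_range _

theorem piece_orderIso :
    ∃ k : ℕ, Nonempty (↥(piece n S hS) ≃o Finset (Fin k)) := by
  refine ⟨Fintype.card (IdlSub S), ⟨?_⟩⟩
  have e1 : Finset (IdlSub S) ≃o ↥(piece n S hS) :=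
    { toEquiv := Equiv.ofInjective _ (phi_inj n S hS)
      map_rel_iff' := by
        intro U V
        exact phi_le_iff n S hS }
  have e2 : Finset (IdlSub S) ≃o Finset (Fin (Fintype.card (IdlSub S))) :=
    { toEquiv := Equiv.finsetCongr (Fintype.equivFin (IdlSub S))
      map_rel_iff' := by
        intro U V
        show U.map _ ⊆ V.map _ ↔ U ≤ V
        rw [Finset.map_subset_map] }
  exact e1.symm.trans e2

theorem mem_piece_of_mem {x : LevC D n} (hx : x ∈ S) : cmk D n x ∈ piece n S hS := by
  refine ⟨epsS S x, ?_⟩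
  rw [phi, ← emb_eq_gamma S hS hx]
  have h1 : iota D (Nat.le_succ n) x = stepEmb D n x := by
    rw [iota_succ D (le_refl n), iota_self]
  rw [show (emb (LevC D n) x : LevC D (n+1)) = stepEmb D n x from rfl, ← h1, cmk_iota]

theorem piece_covers (z : Colim D) : ∃ (m : ℕ) (T : Finset (LevC D m)) (hT : IsSubSL T),
    z ∈ piece m T hT := by
  obtain ⟨m, x, -, rfl⟩ := exists_repr D z 0
  refine ⟨m, insert ⊥ {x}, ⟨Finset.mem_insert_self _ _, ?_⟩, mem_piece_of_mem _ _ _ (by simp)⟩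
  intro a ha b hb
  simp only [Finset.mem_insert, Finset.mem_singleton] at ha hb ⊢
  rcases ha with rfl | rfl <;> rcases hb with rfl | rfl <;> simp

/-- join closure of a finite set -/
def joinClo (A : Finset (LevC D m)) : Finset (LevC D m) :=
  A.powerset.image (fun T => T.sup id)

theorem joinClo_subSL (A : Finset (LevC D m)) : IsSubSL (joinClo A) := by
  constructor
  · rw [joinClo, Finset.mem_image]
    exact ⟨∅, Finset.empty_mem_powerset A, rfl⟩
  · intro a ha b hb
    rw [joinClo, Finset.mem_image] at ha hb ⊢
    obtain ⟨T1, hT1, rfl⟩ := ha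
    obtain ⟨T2, hT2, rfl⟩ := hb
    refine ⟨T1 ∪ T2, ?_, ?_⟩
    · rw [Finset.mem_powerset] at hT1 hT2 ⊢
      exact Finset.union_subset hT1 hT2
    · rw [Finset.sup_union]

theorem subset_joinClo (A : Finset (LevC D m)) : A ⊆ joinClo A := by
  intro a ha
  rw [joinClo, Finset.mem_image]
  exact ⟨{a}, Finset.mem_powerset.mpr (Finset.singleton_subset_iff.mpr ha), by simp⟩

theorem piece_directed (n1 : ℕ) (S1 : Finset (LevC D n1)) (hS1 : IsSubSL S1)
    (n2 : ℕ) (S2 : Finset (LevC D n2)) (hS2 : IsSubSL S2) :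
    ∃ (m : ℕ) (T : Finset (LevC D m)) (hT : IsSubSL T),
      piece n1 S1 hS1 ⊆ piece m T hT ∧ piece n2 S2 hS2 ⊆ piece m T hT := by
  set m := max (n1 + 1) (n2 + 1) with hm
  have h1 : n1 + 1 ≤ m := le_max_left _ _
  have h2 : n2 + 1 ≤ m := le_max_right _ _
  set A : Finset (LevC D m) :=
    (Finset.univ.image (fun U : Finset (IdlSub S1) => iota D h1 (gammaF S1 hS1 U))) ∪
    (Finset.univ.image (fun U : Finset (IdlSub S2) => iota D h2 (gammaF S2 hS2 U))) with hA
  refine ⟨m, joinClo A, joinClo_subSL A, ?_, ?_⟩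
  · rintro z ⟨U, rfl⟩
    have : phi n1 S1 hS1 U = cmk D m (iota D h1 (gammaF S1 hS1 U)) := (cmk_iota D h1 _).symm
    rw [this]
    refine mem_piece_of_mem _ _ _ (subset_joinClo A ?_)
    rw [hA]
    refine Finset.mem_union_left _ ?_
    rw [Finset.mem_image]
    exact ⟨U, Finset.mem_univ U, rfl⟩
  · rintro z ⟨U, rfl⟩
    have : phi n2 S2 hS2 U = cmk D m (iota D h2 (gammaF S2 hS2 U)) := (cmk_iota D h2 _).symm
    rw [this]
    refine mem_piece_of_mem _ _ _ (subset_joinClo A ?_)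
    rw [hA]
    refine Finset.mem_union_right _ ?_
    rw [Finset.mem_image]
    exact ⟨U, Finset.mem_univ U, rfl⟩

end ColPieces

/-! ### Top preservation -/

section Top

variable {X : Type u} [SemilatticeSup X] [OrderBot X]

theorem pgen_le_pmk {R : Finset (Gen X) → Finset (Gen X) → Prop}
    {x : Gen X} {F : Finset (Gen X)} (hx : x ∈ F) : pgen R x ≤ pmk R F :=
  pmk_le_iff.mp le_rfl x hx

theorem top_step {t : X} (ht : IsTop t) : IsTop (emb X t) := by
  intro z
  refine Quotient.inductionOn z fun F => ?_
  show pmk (Rels X) F ≤ emb X t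
  erw [pmk_le_iff]
  intro g hg
  match g with
  | Sum.inl b =>
      exact le_trans (le_of_eq rfl) (hom_mono emb_hom (ht b))
  | Sum.inr a =>
      obtain ⟨Sa, Ia, hSa, hIa⟩ := a
      set topS := Sa.sup id with htopS
      have htopmem : topS ∈ Sa := sup_mem_closed hSa.1 hSa.2 (subset_refl Sa)
      have htopnot : topS ∉ Ia := by
        intro hc
        refine hIa.2.2.2.2 (Finset.Subset.antisymm hIa.1 ?_)
        intro y hy
        exact hIa.2.2.1 hy hc (Finset.le_sup (f := id) hy)
      have hmem : (Sum.inr ⟨Sa, Ia, hSa, hIa⟩ : Gen X) ∈ coverSet Sa hSa topS :=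
        atom_mem_coverSet hSa hIa htopnot
      refine le_trans (pgen_le_pmk hmem) ?_
      rw [← emb_eq_cover hSa htopmem]
      exact hom_mono emb_hom (ht topS)

variable {D : Type u} [SemilatticeSup D] [OrderBot D]

theorem top_lev {d : D} (hd : IsTop d) : ∀ n, IsTop (iota D (Nat.zero_le n) d) := by
  intro n
  induction n with
  | zero =>
      have : iota D (Nat.zero_le 0) d = d := iota_self D 0 d
      rw [this]
      exact hd
  | succ n ih =>
      have : iota D (Nat.zero_le (n + 1)) d = stepEmb D n (iota D (Nat.zero_le n) d) :=
        iota_succ D (Nat.zero_le n) (Nat.zero_le (n + 1)) d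
      rw [this]
      exact top_step ih

theorem top_colim {d : D} (hd : IsTop d) : IsTop (cmk D 0 d) := by
  intro z
  obtain ⟨m, x, -, rfl⟩ := exists_repr D z 0
  have h1 : cmk D m x ≤ cmk D m (iota D (Nat.zero_le m) d) :=
    hom_mono (cmk_hom D m) (top_lev hd m x)
  erw [cmk_iota] at h1
  exact h1

end Top

end UB

/-- Every distributive `⟨∨,0⟩`-semilattice `D` is a `⟨∨,0⟩`-retract of an ultraboolean
`⟨∨,0⟩`-semilattice `B`; moreover if `D` has a largest element then `B` can be taken
to have one, preserved by `ε`. -/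
theorem stmt1 {D : Type u} [SemilatticeSup D] [OrderBot D] (hD : SupDistrib D) :
    ∃ (B : SL.{u}) (ε : D → B) (μ : B → D),
      Ultraboolean B.carrier ∧ IsSupBotHom ε ∧ IsSupBotHom μ ∧ μ ∘ ε = id ∧
      ∀ d : D, IsTop d → IsTop (ε d) := by
  refine ⟨⟨UB.Colim D⟩, UB.cmk D 0, UB.muInf hD, ?_, UB.cmk_hom D 0, UB.muInf_hom hD, ?_, ?_⟩
  · refine ⟨{s | ∃ (n : ℕ) (S : Finset (UB.LevC D n)) (hS : UB.IsSubSL S),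
      s = UB.piece n S hS}, ?_, ?_, ?_⟩
    · rintro s1 ⟨n1, S1, hS1, rfl⟩ s2 ⟨n2, S2, hS2, rfl⟩
      obtain ⟨m, T, hT, h1, h2⟩ := UB.piece_directed n1 S1 hS1 n2 S2 hS2
      exact ⟨UB.piece m T hT, ⟨m, T, hT, rfl⟩, h1, h2⟩
    · intro z
      obtain ⟨m, T, hT, hz⟩ := UB.piece_covers z
      exact ⟨UB.piece m T hT, ⟨m, T, hT, rfl⟩, hz⟩
    · rintro s ⟨n, S, hS, rfl⟩
      exact ⟨UB.piece_subsemilat n S hS, UB.piece_finite n S hS, UB.piece_orderIso n S hS⟩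
  · funext d
    exact UB.muInf_eps hD d
  · intro d hd
    exact UB.top_colim hd

end
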